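/- arXiv:1910.04019 — 5 statements merged into one kernel-verified Lean document; each statement's English description precedes it below -/
import Mathlib

section
/- Let (G,σ) be a connected, unbalanced magnetic graph with an entire signature σ taking values in S¹_ℓ. Suppose G has diameter D and finite magnetic girth g^σ, and let D̂ denote the diameter of the lift Ĝ. Then D̂ ≤ 2D + ℓ·g^σ. -/
open Finset ComplexConjugate
open scoped Classical

namespace Mag

variable {V : Type*}

/-- The degree of a vertex: total weight of incident edges. -/
noncomputable def deg [Fintype V] (p : V → V → ℝ) (x : V) : ℝ := ∑ y, p x y

/-- Adjacency: positive edge weight. -/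
def Adj (p : V → V → ℝ) (x y : V) : Prop := 0 < p x y

/-- Axioms of a weighted graph: symmetric nonnegative weights, no loops,
positive degrees. -/
structure IsWeightedGraph [Fintype V] (p : V → V → ℝ) : Prop where
  symm : ∀ x y, p x y = p y x
  nonneg : ∀ x y, 0 ≤ p x y
  loopless : ∀ x, p x x = 0
  deg_pos : ∀ x, 0 < deg p x

/-- Connectivity: any two vertices are joined by a path of successively
adjacent vertices. -/
def Connected (p : V → V → ℝ) : Prop :=
  ∀ x y : V, ∃ L : List V,
    List.Chain (Adj p) x L ∧ (x :: L).getLast (List.cons_ne_nil x L) = y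

/-- The graph distance from `x` to `y` is at most `n`. -/
def distLE (p : V → V → ℝ) (x y : V) (n : ℕ) : Prop :=
  ∃ L : List V, L.length ≤ n ∧ List.Chain (Adj p) x L ∧
    (x :: L).getLast (List.cons_ne_nil x L) = y

/-- `D` is the diameter: every pair of vertices is at distance at most `D`,
and some pair is at distance at least `D`. -/
def IsDiameter (p : V → V → ℝ) (D : ℕ) : Prop :=
  (∀ x y, distLE p x y D) ∧ ∃ x y, ∀ n, distLE p x y n → D ≤ n

/-- The (normalized) graph Laplace operator on complex-valued functions. -/
noncomputable def lap [Fintype V] (p : V → V → ℝ) (f : V → ℂ) (x : V) : ℂ :=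
  (deg p x : ℂ)⁻¹ * ∑ y, (p x y : ℂ) * (f y - f x)

/-- The graph Laplace operator acting on real-valued functions. -/
noncomputable def lapR [Fintype V] (p : V → V → ℝ) (u : V → ℝ) (x : V) : ℝ :=
  (deg p x)⁻¹ * ∑ y, p x y * (u y - u x)

/-- The energy `|∇f|²(x)` of a function at a vertex. -/
noncomputable def energy [Fintype V] (p : V → V → ℝ) (f : V → ℂ) (x : V) : ℝ :=
  (deg p x)⁻¹ * ∑ y, p x y * ‖f y - f x‖ ^ 2

/-- The first curvature operator `Γ`. -/
noncomputable def gamma [Fintype V] (p : V → V → ℝ) (f g : V → ℂ) (x : V) : ℂ :=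
  (1 / 2) * (lap p (fun v => f v * conj (g v)) x - f x * conj (lap p g x)
    - lap p f x * conj (g x))

/-- The iterated (Ricci) curvature operator `Γ₂`. -/
noncomputable def gamma2 [Fintype V] (p : V → V → ℝ) (f g : V → ℂ) (x : V) : ℂ :=
  (1 / 2) * (lap p (gamma p f g) x - gamma p f (lap p g) x - gamma p (lap p f) g x)

/-- `f` satisfies the curvature-dimension inequality `CD(n,κ)`:
`Γ₂(f,f)(x) ≥ (1/n)|Δf(x)|² + κ·Γ(f,f)(x)` at every vertex. -/
def SatCD [Fintype V] (p : V → V → ℝ) (n κ : ℝ) (f : V → ℂ) : Prop :=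
  ∀ x : V, (1 / n) * ‖lap p f x‖ ^ 2 + κ * (gamma p f f x).re ≤ (gamma2 p f f x).re

/-- The magnetic Laplace operator. -/
noncomputable def magLap [Fintype V] (p : V → V → ℝ) (σ : V → V → ℂ)
    (f : V → ℂ) (x : V) : ℂ :=
  (deg p x : ℂ)⁻¹ * ∑ y, (p x y : ℂ) * (σ x y * f y - f x)

/-- The magnetic energy `|∇^σ f|²(x)`. -/
noncomputable def magEnergy [Fintype V] (p : V → V → ℝ) (σ : V → V → ℂ)
    (f : V → ℂ) (x : V) : ℝ :=
  (deg p x)⁻¹ * ∑ y, p x y * ‖σ x y * f y - f x‖ ^ 2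

/-- The first magnetic curvature operator `Γ^σ`. -/
noncomputable def magGamma [Fintype V] (p : V → V → ℝ) (σ : V → V → ℂ)
    (f g : V → ℂ) (x : V) : ℂ :=
  (1 / 2) * (magLap p σ (fun v => f v * conj (g v)) x - f x * conj (magLap p σ g x)
    - magLap p σ f x * conj (g x))

/-- The magnetic Ricci curvature operator `Γ₂^σ`. -/
noncomputable def magGamma2 [Fintype V] (p : V → V → ℝ) (σ : V → V → ℂ)
    (f g : V → ℂ) (x : V) : ℂ :=
  (1 / 2) * (lap p (magGamma p σ f g) x - magGamma p σ f (magLap p σ g) x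
    - magGamma p σ (magLap p σ f) g x)

/-- `f` satisfies the magnetic curvature-dimension inequality `CD^σ(n,κ)`. -/
def SatCDSigma [Fintype V] (p : V → V → ℝ) (σ : V → V → ℂ) (n κ : ℝ)
    (f : V → ℂ) : Prop :=
  ∀ x : V, (1 / n) * ‖magLap p σ f x‖ ^ 2 + κ * (magGamma p σ f f x).re
    ≤ (magGamma2 p σ f f x).re

/-- A signature with values in the group `S¹_ℓ` of `ℓ`-th roots of unity:
`σ_{xy}^ℓ = 1` and `σ_{yx} = σ_{xy}⁻¹` on oriented edges. -/
structure IsSignature (p : V → V → ℝ) (σ : V → V → ℂ) (ℓ : ℕ) : Prop where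
  mem : ∀ x y, Adj p x y → σ x y ^ ℓ = 1
  inv : ∀ x y, Adj p x y → σ x y * σ y x = 1

/-- The signature is entire: its values (on oriented edges) generate all of
`S¹_ℓ`, i.e. every `ℓ`-th root of unity is a product of signature values. -/
def Entire (p : V → V → ℝ) (σ : V → V → ℂ) (ℓ : ℕ) : Prop :=
  ∀ z : ℂ, z ^ ℓ = 1 →
    ∃ L : List (V × V), (∀ e ∈ L, Adj p e.1 e.2) ∧ (L.map fun e => σ e.1 e.2).prod = z

/-- The product of the signature values along the consecutive edges of a
list of vertices. -/
noncomputable def sigProd (σ : V → V → ℂ) (L : List V) : ℂ :=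
  ((L.zip L.tail).map fun e => σ e.1 e.2).prod

/-- A directed cycle: a closed walk along adjacent vertices. -/
def IsCycle (p : V → V → ℝ) (L : List V) : Prop :=
  2 ≤ L.length ∧ L.Chain' (Adj p) ∧ L.head? = L.getLast?

/-- A magnetic graph is balanced if the signature product along every directed
cycle equals `1`. -/
def Balanced (p : V → V → ℝ) (σ : V → V → ℂ) : Prop :=
  ∀ L : List V, IsCycle p L → sigProd σ L = 1

/-- A directed cycle whose signature product generates `S¹_ℓ`. -/
def IsGenCycle (p : V → V → ℝ) (σ : V → V → ℂ) (ℓ : ℕ) (L : List V) : Prop :=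
  IsCycle p L ∧ ∀ z : ℂ, z ^ ℓ = 1 → ∃ m : ℕ, sigProd σ L ^ m = z

/-- `g` is the magnetic girth: the length of a shortest directed cycle whose
signature product generates `S¹_ℓ`.  (A list of `g+1` vertices, with equal
endpoints, traverses `g` edges.) -/
def IsMagGirth (p : V → V → ℝ) (σ : V → V → ℂ) (ℓ : ℕ) (g : ℕ) : Prop :=
  (∃ L, IsGenCycle p σ ℓ L ∧ L.length = g + 1) ∧
  ∀ L, IsGenCycle p σ ℓ L → g + 1 ≤ L.length

/-- The `ℓ`-th roots of unity in `ℂ` form a finite type. -/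
noncomputable instance rootsFintype (ℓ : ℕ) [NeZero ℓ] :
    Fintype {z : ℂ // z ^ ℓ = 1} := by
  apply Fintype.ofFinset ((Polynomial.nthRoots ℓ (1 : ℂ)).toFinset)
  intro z
  rw [Multiset.mem_toFinset, Polynomial.mem_nthRoots (Nat.pos_of_ne_zero (NeZero.ne ℓ))]
  exact Iff.rfl

/-- The weight function of the lift (covering) graph `Ĝ` on `V × S¹_ℓ`. -/
noncomputable def liftP (p : V → V → ℝ) (σ : V → V → ℂ) (ℓ : ℕ) :
    V × {z : ℂ // z ^ ℓ = 1} → V × {z : ℂ // z ^ ℓ = 1} → ℝ :=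
  fun a b =>
    if Adj p a.1 b.1 ∧ (b.2 : ℂ) = (a.2 : ℂ) * σ a.1 b.1 then p a.1 b.1 else 0

/-- The lift embedding `f̂(x,ξ) = ξ·f(x)`. -/
noncomputable def liftEmb (ℓ : ℕ) (f : V → ℂ) : V × {z : ℂ // z ^ ℓ = 1} → ℂ :=
  fun a => (a.2 : ℂ) * f a.1

/-- A simple graph: all edge weights are `0` or `1`. -/
def Simple (p : V → V → ℝ) : Prop := ∀ x y, p x y = 0 ∨ p x y = 1

/-- `d` is the maximum degree of the graph. -/
def IsMaxDegree [Fintype V] (p : V → V → ℝ) (d : ℝ) : Prop :=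
  (∀ x, deg p x ≤ d) ∧ ∃ x, deg p x = d

/-- `l` is the least eigenvalue of `-Δ^σ`. -/
def IsLeastEigenvalue [Fintype V] (p : V → V → ℝ) (σ : V → V → ℂ) (l : ℝ) : Prop :=
  (∃ f : V → ℂ, f ≠ 0 ∧ ∀ x, -magLap p σ f x = (l : ℂ) * f x) ∧
  ∀ (μ : ℝ) (f : V → ℂ), f ≠ 0 → (∀ x, -magLap p σ f x = (μ : ℂ) * f x) → l ≤ μ

/-- The set of frustration values of a vertex subset `V₁`: sums
`∑_{edges {x,y} ⊆ V₁} p(x,y)|τ(x) − σ_{xy}τ(y)|` over switching functions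
`τ : V₁ → S¹_ℓ`.  (Each undirected edge is counted once, via the factor `1/2`.) -/
def frustrationSet [Fintype V] (p : V → V → ℝ) (σ : V → V → ℂ) (ℓ : ℕ)
    (V₁ : Finset V) : Set ℝ :=
  { r | ∃ τ : V → ℂ, (∀ x ∈ V₁, τ x ^ ℓ = 1) ∧
      r = (1 / 2) * ∑ x ∈ V₁, ∑ y ∈ V₁, p x y * ‖τ x - σ x y * τ y‖ }

/-- The set of Cheeger ratios `(ι^σ(V₁) + |E(V₁,V₁ᶜ)|)/vol(V₁)` over nonempty
vertex subsets `V₁`, where `ι^σ(V₁)` is the frustration index of `V₁`. -/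
def cheegerSet [Fintype V] (p : V → V → ℝ) (σ : V → V → ℂ) (ℓ : ℕ) : Set ℝ :=
  { r | ∃ V₁ : Finset V, V₁.Nonempty ∧ ∃ ι : ℝ, IsLeast (frustrationSet p σ ℓ V₁) ι ∧
      r = (ι + ∑ x ∈ V₁, ∑ y ∈ V₁ᶜ, p x y) / ∑ x ∈ V₁, deg p x }

/-- `h` is the magnetic Cheeger number `h₁^σ`. -/
def IsCheeger [Fintype V] (p : V → V → ℝ) (σ : V → V → ℂ) (ℓ : ℕ) (h : ℝ) : Prop :=
  IsLeast (cheegerSet p σ ℓ) h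

section Aux

variable {p : V → V → ℝ} {σ : V → V → ℂ} {ℓ : ℕ}

lemma chain_append_aux {R : V → V → Prop} :
    ∀ (L1 : List V) (x y : V) (L2 : List V),
    List.Chain R x L1 → (x :: L1).getLast (List.cons_ne_nil x L1) = y →
    List.Chain R y L2 →
    List.Chain R x (L1 ++ L2) ∧
      (x :: (L1 ++ L2)).getLast (List.cons_ne_nil _ _)
        = (y :: L2).getLast (List.cons_ne_nil _ _)
  | [], x, y, L2, _, hlast, h2 => by
      simp only [List.getLast_singleton] at hlast
      subst hlast
      exact ⟨h2, rfl⟩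
  | a :: t, x, y, L2, h1, hlast, h2 => by
      replace h1 := List.chain_cons.mp h1
      rw [List.getLast_cons (List.cons_ne_nil a t)] at hlast
      obtain ⟨hc, hg⟩ := chain_append_aux t a y L2 h1.2 hlast h2
      refine ⟨List.chain_cons.mpr ⟨h1.1, hc⟩, ?_⟩
      rw [List.cons_append, List.getLast_cons (List.cons_ne_nil a (t ++ L2))]
      exact hg

lemma distLE_trans {x y z : V} {n m : ℕ}
    (h1 : distLE p x y n) (h2 : distLE p y z m) : distLE p x z (n + m) := by
  obtain ⟨L1, hl1, hc1, hg1⟩ := h1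
  obtain ⟨L2, hl2, hc2, hg2⟩ := h2
  obtain ⟨hc, hg⟩ := chain_append_aux L1 x y L2 hc1 hg1 hc2
  exact ⟨L1 ++ L2, by simpa using Nat.add_le_add hl1 hl2, hc, hg.trans hg2⟩

lemma distLE_mono {x y : V} {n m : ℕ} (h : n ≤ m) (hd : distLE p x y n) :
    distLE p x y m := by
  obtain ⟨L, hl, hc, hg⟩ := hd
  exact ⟨L, hl.trans h, hc, hg⟩

lemma distLE_refl (x : V) : distLE p x x 0 :=
  ⟨[], by simp, List.Chain.nil, rfl⟩

lemma distLE_single {x y : V} (h : Adj p x y) : distLE p x y 1 :=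
  ⟨[y], by simp, List.chain_cons.mpr ⟨h, List.Chain.nil⟩, by simp⟩

lemma lift_adj {x y : V} {ξ η : {z : ℂ // z ^ ℓ = 1}} (hxy : Adj p x y)
    (hfib : (η : ℂ) = (ξ : ℂ) * σ x y) :
    Adj (liftP p σ ℓ) (x, ξ) (y, η) := by
  unfold Adj liftP
  rw [if_pos ⟨hxy, hfib⟩]
  exact hxy

lemma sigProd_cons (x a : V) (t : List V) :
    sigProd σ (x :: a :: t) = σ x a * sigProd σ (a :: t) := by
  simp [sigProd]

lemma sigProd_root (hσ : IsSignature p σ ℓ) :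
    ∀ (L : List V) (x : V), List.Chain (Adj p) x L → sigProd σ (x :: L) ^ ℓ = 1
  | [], x, _ => by simp [sigProd]
  | a :: t, x, h => by
      replace h := List.chain_cons.mp h
      rw [sigProd_cons, mul_pow, hσ.mem x a h.1, one_mul]
      exact sigProd_root hσ t a h.2

lemma lift_walk (hσ : IsSignature p σ ℓ) :
    ∀ (L : List V) (x : V) (ξ : {z : ℂ // z ^ ℓ = 1}),
    List.Chain (Adj p) x L →
    ∀ (η : {z : ℂ // z ^ ℓ = 1}), (η : ℂ) = (ξ : ℂ) * sigProd σ (x :: L) →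
    distLE (liftP p σ ℓ) (x, ξ) ((x :: L).getLast (List.cons_ne_nil x L), η) L.length
  | [], x, ξ, _, η, hη => by
      have : η = ξ := Subtype.ext (by simpa [sigProd] using hη)
      subst this
      exact distLE_refl _
  | a :: t, x, ξ, h, η, hη => by
      replace h := List.chain_cons.mp h
      have hroot : ((ξ : ℂ) * σ x a) ^ ℓ = 1 := by
        rw [mul_pow, ξ.2, hσ.mem x a h.1, one_mul]
      set ξ' : {z : ℂ // z ^ ℓ = 1} := ⟨(ξ : ℂ) * σ x a, hroot⟩ with hξ'
      have hη' : (η : ℂ) = (ξ' : ℂ) * sigProd σ (a :: t) := by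
        rw [hη, sigProd_cons]; ring
      have ih := lift_walk hσ t a ξ' h.2 η hη'
      have step : distLE (liftP p σ ℓ) (x, ξ) (a, ξ') 1 :=
        distLE_single (lift_adj h.1 rfl)
      have := distLE_trans step ih
      rw [List.getLast_cons (List.cons_ne_nil a t)]
      simpa [Nat.add_comm] using this

lemma cycle_iter (hσ : IsSignature p σ ℓ) {v : V} {T : List V}
    (hchain : List.Chain (Adj p) v T)
    (hlast : (v :: T).getLast (List.cons_ne_nil v T) = v) :
    ∀ (m : ℕ) (ζ η : {z : ℂ // z ^ ℓ = 1}),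
      (η : ℂ) = (ζ : ℂ) * sigProd σ (v :: T) ^ m →
      distLE (liftP p σ ℓ) (v, ζ) (v, η) (m * T.length)
  | 0, ζ, η, hη => by
      have : η = ζ := Subtype.ext (by simpa using hη)
      subst this
      exact distLE_mono (Nat.zero_le _) (distLE_refl _)
  | (m + 1), ζ, η, hη => by
      have hroot : ((ζ : ℂ) * sigProd σ (v :: T)) ^ ℓ = 1 := by
        rw [mul_pow, ζ.2, sigProd_root hσ T v hchain, one_mul]
      set ζ' : {z : ℂ // z ^ ℓ = 1} := ⟨(ζ : ℂ) * sigProd σ (v :: T), hroot⟩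
      have step := lift_walk hσ T v ζ hchain ζ' rfl
      rw [hlast] at step
      have hη' : (η : ℂ) = (ζ' : ℂ) * sigProd σ (v :: T) ^ m := by
        rw [hη, pow_succ]; ring
      have ih := cycle_iter hσ hchain hlast m ζ' η hη'
      have := distLE_trans step ih
      have hlen : T.length + m * T.length = (m + 1) * T.length := by ring
      rwa [hlen] at this

end Aux

/-- Lemma `liftdiameter`.  For a connected, unbalanced magnetic
graph with entire signature in `S¹_ℓ`, diameter `D` and finite magnetic girth
`g^σ`, the diameter `D̂` of the lift satisfies `D̂ ≤ 2D + ℓ·g^σ`. -/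
theorem lift_diameter_le {V : Type*} [Fintype V] [Nonempty V]
    (p : V → V → ℝ) (σ : V → V → ℂ) (ℓ : ℕ) [NeZero ℓ]
    (hG : IsWeightedGraph p) (hconn : Connected p)
    (hσ : IsSignature p σ ℓ) (hent : Entire p σ ℓ) (hunbal : ¬ Balanced p σ)
    (D g Dhat : ℕ) (hD : IsDiameter p D) (hg : IsMagGirth p σ ℓ g)
    (hDhat : IsDiameter (liftP p σ ℓ) Dhat) :
    Dhat ≤ 2 * D + ℓ * g := by
  obtain ⟨hDall, -⟩ := hD
  obtain ⟨-, x0, y0, hDhmax⟩ := hDhat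
  obtain ⟨x, ξ⟩ := x0
  obtain ⟨y, η⟩ := y0
  obtain ⟨⟨L, ⟨hcyc, hgen⟩, hlen⟩, -⟩ := hg
  obtain ⟨hlen2, hchain', hheads⟩ := hcyc
  cases L with
  | nil => simp at hlen
  | cons v T =>
    have hTlen : T.length = g := by simpa using hlen
    have hchain : List.Chain (Adj p) v T := hchain'
    have hlast : (v :: T).getLast (List.cons_ne_nil v T) = v := by
      rw [List.head?_cons, List.getLast?_eq_getLast (List.cons_ne_nil v T)] at hheads
      exact (Option.some.inj hheads).symm
    set s := sigProd σ (v :: T) with hs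
    have hsroot : s ^ ℓ = 1 := sigProd_root hσ T v hchain
    obtain ⟨L1, hl1, hc1, hg1⟩ := hDall x v
    obtain ⟨L2, hl2, hc2, hg2⟩ := hDall v y
    set σ1 := sigProd σ (x :: L1) with hσ1
    set σ2 := sigProd σ (v :: L2) with hσ2
    have hσ1r : σ1 ^ ℓ = 1 := sigProd_root hσ L1 x hc1
    have hσ2r : σ2 ^ ℓ = 1 := sigProd_root hσ L2 v hc2
    have hne : (ξ : ℂ) * σ1 * σ2 ≠ 0 := by
      intro h0
      have h1 : ((ξ : ℂ) * σ1 * σ2) ^ ℓ = 1 := by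
        rw [mul_pow, mul_pow, ξ.2, hσ1r, hσ2r]; ring
      rw [h0, zero_pow (NeZero.ne ℓ)] at h1
      exact zero_ne_one h1
    set z : ℂ := (η : ℂ) * ((ξ : ℂ) * σ1 * σ2)⁻¹ with hz
    have hzroot : z ^ ℓ = 1 := by
      rw [hz, mul_pow, inv_pow, mul_pow, mul_pow, ξ.2, η.2, hσ1r, hσ2r]
      norm_num
    obtain ⟨m, hm⟩ := hgen z hzroot
    have hsm : s ^ (m % ℓ) = z := by
      rw [← hm]
      conv_rhs => rw [← Nat.mod_add_div m ℓ]
      rw [pow_add, pow_mul, hsroot, one_pow, mul_one]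
    have hζroot : ((ξ : ℂ) * σ1) ^ ℓ = 1 := by rw [mul_pow, ξ.2, hσ1r]; ring
    set ζ : {w : ℂ // w ^ ℓ = 1} := ⟨(ξ : ℂ) * σ1, hζroot⟩ with hζ
    have hζ'root : ((ζ : ℂ) * s ^ (m % ℓ)) ^ ℓ = 1 := by
      rw [mul_pow, ζ.2, ← pow_mul, mul_comm (m % ℓ) ℓ, pow_mul, hsroot, one_pow]; ring
    set ζ' : {w : ℂ // w ^ ℓ = 1} := ⟨(ζ : ℂ) * s ^ (m % ℓ), hζ'root⟩ with hζ'
    have w1 : distLE (liftP p σ ℓ) (x, ξ) (v, ζ) L1.length := by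
      have h := lift_walk hσ L1 x ξ hc1 ζ rfl
      rwa [hg1] at h
    have wc : distLE (liftP p σ ℓ) (v, ζ) (v, ζ') ((m % ℓ) * T.length) :=
      cycle_iter hσ hchain hlast (m % ℓ) ζ ζ' rfl
    have hηval : (η : ℂ) = (ζ' : ℂ) * σ2 := by
      show (η : ℂ) = (ξ : ℂ) * σ1 * s ^ (m % ℓ) * σ2
      rw [hsm, hz]
      have h3 := mul_ne_zero_iff.mp hne
      have h4 := mul_ne_zero_iff.mp h3.1
      field_simp [h3.2, h4.1, h4.2]
    have w2 : distLE (liftP p σ ℓ) (v, ζ') (y, η) L2.length := by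
      have h := lift_walk hσ L2 v ζ' hc2 η hηval
      rwa [hg2] at h
    have total := distLE_trans (distLE_trans w1 wc) w2
    have hle : L1.length + (m % ℓ) * T.length + L2.length ≤ 2 * D + ℓ * g := by
      have h1 : (m % ℓ) * T.length ≤ ℓ * g := by
        rw [hTlen]
        exact Nat.mul_le_mul_right g
          (Nat.le_of_lt (Nat.mod_lt m (Nat.pos_of_ne_zero (NeZero.ne ℓ))))
      omega
    exact hDhmax _ (distLE_mono hle total)


end Mag
end

section
/- Let (G,σ) be a magnetic graph with signature values in S¹_ℓ. For every function f : V → ℂ and every vertex (x,ξ) ∈ V × S¹_ℓ of the lift Ĝ, the energy of the lift embedding f̂ computed in Ĝ equals the magnetic energy of f at x: |∇f̂|²(x,ξ) = |∇^σ f|²(x). -/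
open Finset ComplexConjugate
open scoped Classical

namespace Mag

variable {V : Type*}

/-- The energy of the lift embedding `f̂` computed in the lift
`Ĝ` equals the magnetic energy of `f`: `|∇f̂|²(x,ξ) = |∇^σ f|²(x)`. -/
theorem lift_energy {V : Type*} [Fintype V] [Nonempty V]
    (p : V → V → ℝ) (σ : V → V → ℂ) (ℓ : ℕ) [NeZero ℓ]
    (hG : IsWeightedGraph p) (hσ : IsSignature p σ ℓ)
    (f : V → ℂ) (x : V) (ξ : {z : ℂ // z ^ ℓ = 1}) :
    energy (liftP p σ ℓ) (liftEmb ℓ f) (x, ξ) = magEnergy p σ f x := by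
  have hℓ : ℓ ≠ 0 := NeZero.ne ℓ
  have hnorm : ∀ z : {z : ℂ // z ^ ℓ = 1}, ‖(z : ℂ)‖ = 1 := by
    intro z
    exact Complex.norm_eq_one_of_pow_eq_one z.2 hℓ
  -- key pointwise computation
  have key : ∀ (y : V) (g : {z : ℂ // z ^ ℓ = 1} → ℝ),
      ∑ η : {z : ℂ // z ^ ℓ = 1}, liftP p σ ℓ (x, ξ) (y, η) * g η =
        (if h : Adj p x y then p x y * g ⟨(ξ : ℂ) * σ x y, by
          rw [mul_pow, ξ.2, hσ.mem x y h, one_mul]⟩ else 0) := by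
    intro y g
    by_cases hxy : Adj p x y
    · simp only [hxy, dif_pos]
      set c : {z : ℂ // z ^ ℓ = 1} := ⟨(ξ : ℂ) * σ x y, by
        rw [mul_pow, ξ.2, hσ.mem x y hxy, one_mul]⟩ with hc
      have : ∀ η : {z : ℂ // z ^ ℓ = 1},
          liftP p σ ℓ (x, ξ) (y, η) * g η = if η = c then p x y * g η else 0 := by
        intro η
        simp only [liftP, hxy, true_and]
        by_cases hη : η = c
        · subst hη; simp [hc]
        · have : ¬ ((η : ℂ) = (ξ : ℂ) * σ x y) := fun h => hη (Subtype.ext h)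
          simp [this, hη]
      rw [Finset.sum_congr rfl fun η _ => this η]
      simp
    · have hp : p x y = 0 := by
        by_contra h
        exact hxy (lt_of_le_of_ne (hG.nonneg x y) (Ne.symm h))
      simp only [hxy, if_false]
      apply Finset.sum_eq_zero
      intro η _
      simp [liftP, hxy]
  have hdeg : deg (liftP p σ ℓ) (x, ξ) = deg p x := by
    rw [deg, Fintype.sum_prod_type, deg]
    refine Finset.sum_congr rfl fun y _ => ?_
    have := key y (fun _ => 1)
    simp only [mul_one] at this
    rw [this]
    by_cases hxy : Adj p x y
    · simp [hxy]
    · have hp : p x y = 0 := by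
        by_contra h
        exact hxy (lt_of_le_of_ne (hG.nonneg x y) (Ne.symm h))
      simp [hxy, hp]
  have hsum : ∑ a : V × {z : ℂ // z ^ ℓ = 1},
      liftP p σ ℓ (x, ξ) a * ‖liftEmb ℓ f a - liftEmb ℓ f (x, ξ)‖ ^ 2 =
      ∑ y, p x y * ‖σ x y * f y - f x‖ ^ 2 := by
    rw [Fintype.sum_prod_type]
    refine Finset.sum_congr rfl fun y _ => ?_
    rw [key y (fun η => ‖liftEmb ℓ f (y, η) - liftEmb ℓ f (x, ξ)‖ ^ 2)]
    by_cases hxy : Adj p x y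
    · rw [dif_pos hxy]
      simp only [liftEmb]
      congr 1
      have : (ξ : ℂ) * σ x y * f y - (ξ : ℂ) * f x = (ξ : ℂ) * (σ x y * f y - f x) := by
        ring
      rw [this, norm_mul, hnorm ξ, one_mul]
    · have hp : p x y = 0 := by
        by_contra h
        exact hxy (lt_of_le_of_ne (hG.nonneg x y) (Ne.symm h))
      simp [hxy, hp]
  rw [energy, magEnergy, hdeg, hsum]

end Mag
end

section
/- Let (G,σ) be a magnetic graph with signature values in S¹_ℓ. For every function f : V → ℂ and every vertex (x,ξ) ∈ V × S¹_ℓ of the lift Ĝ, the Laplacian of the lift embedding satisfies (Δ̂ f̂)(x,ξ) = ξ·(Δ^σ f)(x). -/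
open Finset ComplexConjugate
open scoped Classical

namespace Mag

variable {V : Type*}

/-- The Laplacian of the lift embedding satisfies
`(Δ̂ f̂)(x,ξ) = ξ·(Δ^σ f)(x)`. -/
theorem lift_lap {V : Type*} [Fintype V] [Nonempty V]
    (p : V → V → ℝ) (σ : V → V → ℂ) (ℓ : ℕ) [NeZero ℓ]
    (hG : IsWeightedGraph p) (hσ : IsSignature p σ ℓ)
    (f : V → ℂ) (x : V) (ξ : {z : ℂ // z ^ ℓ = 1}) :
    lap (liftP p σ ℓ) (liftEmb ℓ f) (x, ξ) = (ξ : ℂ) * magLap p σ f x := by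
  classical
  have hp0 : ∀ y, ¬ Adj p x y → p x y = 0 := fun y h =>
    le_antisymm (not_lt.mp h) (hG.nonneg x y)
  have hdeg : deg (liftP p σ ℓ) (x, ξ) = deg p x := by
    unfold deg
    rw [Fintype.sum_prod_type]
    refine Finset.sum_congr rfl fun y _ => ?_
    by_cases hxy : Adj p x y
    · have hroot : ((ξ : ℂ) * σ x y) ^ ℓ = 1 := by
        rw [mul_pow, ξ.2, hσ.mem x y hxy, one_mul]
      rw [Finset.sum_eq_single (⟨(ξ : ℂ) * σ x y, hroot⟩ : {z : ℂ // z ^ ℓ = 1})]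
      · simp [liftP, hxy]
      · intro η _ hne
        simp only [liftP]
        rw [if_neg]
        rintro ⟨-, h2⟩
        exact hne (Subtype.ext h2)
      · intro h; exact absurd (Finset.mem_univ _) h
    · simp [liftP, hxy, hp0 y hxy]
  unfold lap magLap
  rw [hdeg, Fintype.sum_prod_type]
  have hsum : ∀ y, ∑ η : {z : ℂ // z ^ ℓ = 1},
      (liftP p σ ℓ (x, ξ) (y, η) : ℂ) * (liftEmb ℓ f (y, η) - liftEmb ℓ f (x, ξ))
      = (ξ : ℂ) * ((p x y : ℂ) * (σ x y * f y - f x)) := by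
    intro y
    by_cases hxy : Adj p x y
    · have hroot : ((ξ : ℂ) * σ x y) ^ ℓ = 1 := by
        rw [mul_pow, ξ.2, hσ.mem x y hxy, one_mul]
      rw [Finset.sum_eq_single (⟨(ξ : ℂ) * σ x y, hroot⟩ : {z : ℂ // z ^ ℓ = 1})]
      · simp only [liftP, liftEmb, hxy, true_and, if_true, if_pos rfl]
        ring
      · intro η _ hne
        simp only [liftP]
        rw [if_neg, Complex.ofReal_zero, zero_mul]
        rintro ⟨-, h2⟩
        exact hne (Subtype.ext h2)
      · intro h; exact absurd (Finset.mem_univ _) h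
    · simp [liftP, hxy, hp0 y hxy]
  simp_rw [hsum]
  rw [← Finset.mul_sum]
  ring

end Mag
end

section
/- Let (G,σ) be a magnetic graph with signature values in S¹_ℓ. If f : V → ℂ is an eigenfunction of Δ^σ with eigenvalue λ (i.e. f is nonzero and Δ^σ f = λ f), then the lift embedding f̂ is an eigenfunction of the lift Laplacian Δ̂ with the same eigenvalue λ (i.e. f̂ is nonzero and Δ̂ f̂ = λ f̂). -/
open Finset ComplexConjugate
open scoped Classical

namespace Mag

variable {V : Type*}

lemma sum_root {M : Type*} [AddCommMonoid M] (ℓ : ℕ) [NeZero ℓ]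
    (c : ℂ) (hc : c ^ ℓ = 1) (g : {z : ℂ // z ^ ℓ = 1} → M) :
    ∑ η : {z : ℂ // z ^ ℓ = 1}, (if (η : ℂ) = c then g η else 0) = g ⟨c, hc⟩ := by
  rw [show (fun η : {z : ℂ // z ^ ℓ = 1} => if (η : ℂ) = c then g η else 0)
      = fun η => if η = ⟨c, hc⟩ then g η else 0 from ?_]
  · simpa using Finset.sum_ite_eq' Finset.univ ⟨c, hc⟩ g
  · funext η
    congr 1
    simp [Subtype.ext_iff]

/-- Lemma `lifteigenfunction`.  If `f` is an eigenfunction of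
`Δ^σ` with eigenvalue `λ`, then the lift embedding `f̂` is an eigenfunction of
the lift Laplacian `Δ̂` with the same eigenvalue. -/
theorem lift_eigenfunction {V : Type*} [Fintype V] [Nonempty V]
    (p : V → V → ℝ) (σ : V → V → ℂ) (ℓ : ℕ) [NeZero ℓ]
    (hG : IsWeightedGraph p) (hσ : IsSignature p σ ℓ)
    (f : V → ℂ) (lam : ℂ) (hf0 : f ≠ 0)
    (heig : ∀ x, magLap p σ f x = lam * f x) :
    liftEmb ℓ f ≠ 0 ∧
      ∀ a : V × {z : ℂ // z ^ ℓ = 1},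
        lap (liftP p σ ℓ) (liftEmb ℓ f) a = lam * liftEmb ℓ f a := by
  constructor
  · obtain ⟨x, hx⟩ := Function.ne_iff.mp hf0
    intro h
    have h1 : liftEmb ℓ f (x, ⟨1, one_pow ℓ⟩) = 0 := congrFun h _
    simp [liftEmb] at h1
    exact hx h1
  · rintro ⟨x, ξ⟩
    have hpzero : ∀ y, ¬ Adj p x y → p x y = 0 := fun y hy =>
      le_antisymm (not_lt.mp hy) (hG.nonneg x y)
    have hdeg : deg (liftP p σ ℓ) (x, ξ) = deg p x := by
      unfold deg liftP
      rw [Fintype.sum_prod_type]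
      refine Finset.sum_congr rfl fun y _ => ?_
      by_cases hA : Adj p x y
      · have hc : ((ξ : ℂ) * σ x y) ^ ℓ = 1 := by
          rw [mul_pow, ξ.2, hσ.mem x y hA, one_mul]
        have := sum_root ℓ ((ξ : ℂ) * σ x y) hc (fun _ => p x y)
        simpa [hA] using this
      · simp [hA, hpzero y hA]
    have hsum : ∑ b, (liftP p σ ℓ (x, ξ) b : ℂ) *
        (liftEmb ℓ f b - liftEmb ℓ f (x, ξ))
        = (ξ : ℂ) * ∑ y, (p x y : ℂ) * (σ x y * f y - f x) := by
      rw [Finset.mul_sum, Fintype.sum_prod_type]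
      refine Finset.sum_congr rfl fun y _ => ?_
      by_cases hA : Adj p x y
      · have hc : ((ξ : ℂ) * σ x y) ^ ℓ = 1 := by
          rw [mul_pow, ξ.2, hσ.mem x y hA, one_mul]
        have := sum_root ℓ ((ξ : ℂ) * σ x y) hc
          (fun η => (p x y : ℂ) * ((η : ℂ) * f y - (ξ : ℂ) * f x))
        calc ∑ η : {z : ℂ // z ^ ℓ = 1},
              (liftP p σ ℓ (x, ξ) (y, η) : ℂ) *
                (liftEmb ℓ f (y, η) - liftEmb ℓ f (x, ξ))
            = ∑ η : {z : ℂ // z ^ ℓ = 1},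
              (if (η : ℂ) = (ξ : ℂ) * σ x y then
                (p x y : ℂ) * ((η : ℂ) * f y - (ξ : ℂ) * f x) else 0) := by
              refine Finset.sum_congr rfl fun η _ => ?_
              simp only [liftP, liftEmb, hA, true_and]
              split <;> simp
          _ = (p x y : ℂ) * ((ξ : ℂ) * σ x y * f y - (ξ : ℂ) * f x) := this
          _ = (ξ : ℂ) * ((p x y : ℂ) * (σ x y * f y - f x)) := by ring
      · simp [liftP, hA, hpzero y hA, liftEmb]
    have key := heig x
    unfold magLap at key
    unfold lap
    rw [hdeg, hsum]
    simp only [liftEmb]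
    rw [mul_left_comm, key]
    ring

end Mag
end

section
/- Let G be a finite connected weighted graph, n ∈ (1,∞), κ ∈ ℝ, and suppose f : V → ℂ satisfies CD(n,κ). Then at each vertex x ∈ V: (4/n − 2)·|Δf(x)|² + (2 + 2κ)·|∇f|²(x) ≤ (1/d_x) ∑_{y ∼ x} (p(x,y)/d_y) ∑_{z ∼ y} p(y,z)·|f(x) − 2f(y) + f(z)|². -/
open Finset ComplexConjugate
open scoped Classical

namespace Mag

variable {V : Type*}

section Aux

variable {V : Type*} [Fintype V]

private lemma gamma_eq (p : V → V → ℝ) (f g : V → ℂ) (x : V) :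
    gamma p f g x = (1 / 2 : ℂ) * ((deg p x : ℂ)⁻¹ *
      ∑ y, (p x y : ℂ) * ((f y - f x) * conj (g y - g x))) := by
  have hc : conj (lap p g x)
      = (deg p x : ℂ)⁻¹ * ∑ y, (p x y : ℂ) * (conj (g y) - conj (g x)) := by
    unfold lap
    rw [map_mul, map_inv₀, Complex.conj_ofReal, map_sum]
    congr 1
    exact Finset.sum_congr rfl fun y _ => by rw [map_mul, map_sub, Complex.conj_ofReal]
  unfold gamma
  rw [hc]
  unfold lap
  rw [show f x * ((deg p x : ℂ)⁻¹ * ∑ y, (p x y:ℂ) * (conj (g y) - conj (g x)))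
      = (deg p x : ℂ)⁻¹ * ∑ y, f x * ((p x y:ℂ) * (conj (g y) - conj (g x))) by
        simp only [Finset.mul_sum]
        exact Finset.sum_congr rfl fun y _ => by ring]
  rw [show (deg p x : ℂ)⁻¹ * (∑ y, (p x y:ℂ) * (f y - f x)) * conj (g x)
      = (deg p x : ℂ)⁻¹ * ∑ y, ((p x y:ℂ) * (f y - f x)) * conj (g x) by
        simp only [Finset.mul_sum, Finset.sum_mul]
        exact Finset.sum_congr rfl fun y _ => by ring]
  rw [← mul_sub, ← mul_sub, ← Finset.sum_sub_distrib, ← Finset.sum_sub_distrib]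
  congr 2
  refine Finset.sum_congr rfl fun y _ => ?_
  rw [map_sub]
  ring

private lemma gamma_self (p : V → V → ℝ) (f : V → ℂ) (x : V) :
    gamma p f f x = ((energy p f x / 2 : ℝ) : ℂ) := by
  have hz : ∀ z : ℂ, z * conj z = ((‖z‖ ^ 2 : ℝ) : ℂ) := fun z => by
    rw [Complex.mul_conj, Complex.sq_norm]
  rw [gamma_eq]
  unfold energy
  simp only [hz]
  push_cast
  ring

private lemma lap_ofReal (p : V → V → ℝ) (u : V → ℝ) (x : V) :
    lap p (fun v => ((u v : ℝ) : ℂ)) x = ((lapR p u x : ℝ) : ℂ) := by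
  unfold lap lapR
  push_cast
  ring

private lemma sum_p_mul (p : V → V → ℝ) (f : V → ℂ) (x : V) (hd : deg p x ≠ 0) :
    ∑ y, (p x y : ℂ) * (f y - f x) = (deg p x : ℂ) * lap p f x := by
  unfold lap
  rw [← mul_assoc, mul_inv_cancel₀ (by exact_mod_cast hd), one_mul]

private lemma re_mul_conj_comm (z w : ℂ) : (z * conj w).re = (w * conj z).re := by
  simp only [Complex.mul_re, Complex.conj_re, Complex.conj_im]
  ring

private lemma re_mul_conj_self (z : ℂ) : (z * conj z).re = ‖z‖ ^ 2 := by
  rw [Complex.mul_conj, Complex.ofReal_re, Complex.sq_norm]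

private lemma re_gamma (p : V → V → ℝ) (f g : V → ℂ) (x : V) :
    (gamma p f g x).re
      = (1 / 2) * ((deg p x)⁻¹ * ∑ y, p x y * ((f y - f x) * conj (g y - g x)).re) := by
  rw [gamma_eq,
    show (1 / 2 : ℂ) = ((1 / 2 : ℝ) : ℂ) by norm_num,
    show ((deg p x : ℂ))⁻¹ = (((deg p x)⁻¹ : ℝ) : ℂ) by push_cast; ring,
    Complex.re_ofReal_mul, Complex.re_ofReal_mul, Complex.re_sum]
  congr 2
  exact Finset.sum_congr rfl fun y _ => Complex.re_ofReal_mul _ _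

private lemma inner_eq (p : V → V → ℝ) (f : V → ℂ) (x y : V) (hd : deg p y ≠ 0) :
    (deg p y)⁻¹ * ∑ z, p y z * ‖f x - 2 * f y + f z‖ ^ 2
      = energy p f y + ‖f y - f x‖ ^ 2
        - 2 * (lap p f y * conj (f y - f x)).re := by
  have hpt : ∀ z, ‖f x - 2 * f y + f z‖ ^ 2
      = ‖f z - f y‖ ^ 2 + ‖f x - f y‖ ^ 2 + 2 * ((f z - f y) * conj (f x - f y)).re := by
    intro z
    have h1 : f x - 2 * f y + f z = (f z - f y) + (f x - f y) := by ring
    rw [h1,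
      Complex.sq_norm, Complex.sq_norm, Complex.sq_norm, Complex.normSq_add]
  have key : ∑ z, p y z * ‖f x - 2 * f y + f z‖ ^ 2
      = deg p y * energy p f y + deg p y * ‖f y - f x‖ ^ 2
        - deg p y * (2 * (lap p f y * conj (f y - f x)).re) := by
    simp only [hpt, mul_add]
    rw [Finset.sum_add_distrib, Finset.sum_add_distrib]
    have e1 : ∑ z, p y z * ‖f z - f y‖ ^ 2 = deg p y * energy p f y := by
      unfold energy
      rw [← mul_assoc, mul_inv_cancel₀ hd, one_mul]
    have e2 : ∑ z, p y z * ‖f x - f y‖ ^ 2 = deg p y * ‖f y - f x‖ ^ 2 := by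
      rw [← Finset.sum_mul, norm_sub_rev]
      rfl
    have e3 : ∑ z, p y z * (2 * ((f z - f y) * conj (f x - f y)).re)
        = - (deg p y * (2 * (lap p f y * conj (f y - f x)).re)) := by
      have h2 : ∀ z, p y z * (2 * ((f z - f y) * conj (f x - f y)).re)
          = 2 * (((p y z : ℂ) * (f z - f y)) * conj (f x - f y)).re := fun z => by
        rw [mul_assoc, Complex.re_ofReal_mul]
        ring
      simp only [h2]
      rw [← Finset.mul_sum, ← Complex.re_sum, ← Finset.sum_mul, sum_p_mul p f y hd]
      have h4 : (deg p y : ℂ) * lap p f y * conj (f x - f y)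
          = (deg p y : ℂ) * (-(lap p f y * conj (f y - f x))) := by
        rw [show f x - f y = -(f y - f x) by ring, map_neg]
        ring
      rw [h4, Complex.re_ofReal_mul, Complex.neg_re]
      ring
    rw [e1, e2, e3]
    ring
  rw [key]
  field_simp

private lemma gamma2_re (p : V → V → ℝ) (f : V → ℂ) (x : V)
    (hd : ∀ v, deg p v ≠ 0) :
    4 * (gamma2 p f f x).re
      = (deg p x)⁻¹ * ∑ y, p x y * energy p f y - energy p f x
        - (deg p x)⁻¹ * ∑ y, p x y * (2 * (lap p f y * conj (f y - f x)).re)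
        + 2 * ‖lap p f x‖ ^ 2 := by
  have hinv : (deg p x)⁻¹ * deg p x = 1 := inv_mul_cancel₀ (hd x)
  have h1 : lap p (gamma p f f) x = ((lapR p (fun v => energy p f v / 2) x : ℝ) : ℂ) := by
    rw [show gamma p f f = fun v => ((energy p f v / 2 : ℝ) : ℂ) from
      funext fun v => gamma_self p f v]
    exact lap_ofReal p _ x
  unfold gamma2
  rw [show (1 / 2 : ℂ) = ((1 / 2 : ℝ) : ℂ) by norm_num, Complex.re_ofReal_mul,
    Complex.sub_re, Complex.sub_re, h1, Complex.ofReal_re,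
    re_gamma p f (lap p f) x, re_gamma p (lap p f) f x]
  have hsymm : ∑ y, p x y * ((f y - f x) * conj (lap p f y - lap p f x)).re
      = ∑ y, p x y * ((lap p f y - lap p f x) * conj (f y - f x)).re :=
    Finset.sum_congr rfl fun y _ => by rw [re_mul_conj_comm]
  rw [hsymm]
  have hF1 : lapR p (fun v => energy p f v / 2) x
      = (1 / 2) * ((deg p x)⁻¹ * ∑ y, p x y * energy p f y - energy p f x) := by
    unfold lapR
    have hs : ∑ y, p x y * (energy p f y / 2 - energy p f x / 2)
        = (1 / 2) * (∑ y, p x y * energy p f y) - (1 / 2) * (deg p x * energy p f x) := by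
      unfold deg
      rw [Finset.sum_mul, Finset.mul_sum, Finset.mul_sum, ← Finset.sum_sub_distrib]
      exact Finset.sum_congr rfl fun y _ => by ring
    rw [hs]
    linear_combination (-(energy p f x / 2)) * hinv
  have hF2 : ∑ y, p x y * ((lap p f y - lap p f x) * conj (f y - f x)).re
      = (∑ y, p x y * (lap p f y * conj (f y - f x)).re)
        - deg p x * ‖lap p f x‖ ^ 2 := by
    have hsub : ∀ y, p x y * ((lap p f y - lap p f x) * conj (f y - f x)).re
        = p x y * (lap p f y * conj (f y - f x)).re
          - p x y * (lap p f x * conj (f y - f x)).re := fun y => by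
      rw [sub_mul, Complex.sub_re]
      ring
    simp only [hsub]
    rw [Finset.sum_sub_distrib]
    congr 1
    have h5 : ∀ y, p x y * (lap p f x * conj (f y - f x)).re
        = (lap p f x * ((p x y : ℂ) * conj (f y - f x))).re := fun y => by
      rw [mul_left_comm (lap p f x), Complex.re_ofReal_mul]
    simp only [h5]
    rw [← Complex.re_sum, ← Finset.mul_sum]
    have h6 : ∑ y, (p x y : ℂ) * conj (f y - f x) = conj ((deg p x : ℂ) * lap p f x) := by
      rw [← sum_p_mul p f x (hd x), map_sum]
      exact Finset.sum_congr rfl fun y _ => by rw [map_mul, Complex.conj_ofReal]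
    rw [h6, map_mul, Complex.conj_ofReal,
      show lap p f x * ((deg p x : ℂ) * conj (lap p f x))
        = (deg p x : ℂ) * (lap p f x * conj (lap p f x)) by ring,
      Complex.re_ofReal_mul, re_mul_conj_self]
  have hfac : ∑ y, p x y * (2 * (lap p f y * conj (f y - f x)).re)
      = 2 * ∑ y, p x y * (lap p f y * conj (f y - f x)).re := by
    rw [Finset.mul_sum]
    exact Finset.sum_congr rfl fun y _ => by ring
  rw [hF1, hF2, hfac]
  linear_combination (2 * ‖lap p f x‖ ^ 2) * hinv

end Aux

/-- Lemma 2.1.  If `f` satisfies `CD(n,κ)`, then at each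
vertex `x`:
`(4/n − 2)|Δf(x)|² + (2 + 2κ)|∇f|²(x)
  ≤ (1/d_x) ∑_{y∼x} (p_{xy}/d_y) ∑_{z∼y} p_{yz}|f(x) − 2f(y) + f(z)|²`. -/
theorem energy_laplace_bound {V : Type*} [Fintype V] [Nonempty V]
    (p : V → V → ℝ) (hG : IsWeightedGraph p) (hconn : Connected p)
    (n κ : ℝ) (hn : 1 < n) (f : V → ℂ) (hf : SatCD p n κ f) (x : V) :
    (4 / n - 2) * ‖lap p f x‖ ^ 2 + (2 + 2 * κ) * energy p f x ≤
      (deg p x)⁻¹ * ∑ y, (p x y / deg p y) *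
        ∑ z, p y z * ‖f x - 2 * f y + f z‖ ^ 2 := by
  have hd : ∀ v, deg p v ≠ 0 := fun v => (hG.deg_pos v).ne'
  have hγ : (gamma p f f x).re = energy p f x / 2 := by
    rw [gamma_self, Complex.ofReal_re]
  have h1 : ∀ y : V, (p x y / deg p y) * ∑ z, p y z * ‖f x - 2 * f y + f z‖ ^ 2
      = p x y * (energy p f y + ‖f y - f x‖ ^ 2
        - 2 * (lap p f y * conj (f y - f x)).re) := by
    intro y
    rw [div_eq_mul_inv, mul_assoc, inner_eq p f x y (hd y)]
  have hsplit : (deg p x)⁻¹ * ∑ y, (p x y / deg p y) * ∑ z, p y z * ‖f x - 2 * f y + f z‖ ^ 2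
      = 4 * (gamma2 p f f x).re + 2 * energy p f x - 2 * ‖lap p f x‖ ^ 2 := by
    simp only [h1]
    rw [gamma2_re p f x hd]
    have h2 : ∀ y : V, p x y * (energy p f y + ‖f y - f x‖ ^ 2
          - 2 * (lap p f y * conj (f y - f x)).re)
        = (p x y * energy p f y + p x y * ‖f y - f x‖ ^ 2)
          - p x y * (2 * (lap p f y * conj (f y - f x)).re) := fun y => by ring
    simp only [h2]
    rw [Finset.sum_sub_distrib, Finset.sum_add_distrib, mul_sub, mul_add]
    have h3 : (deg p x)⁻¹ * ∑ y, p x y * ‖f y - f x‖ ^ 2 = energy p f x := rfl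
    rw [h3]
    ring
  rw [hsplit]
  have hcd := hf x
  rw [hγ] at hcd
  have hn4 : 4 / n = 4 * (1 / n) := by ring
  rw [hn4]
  linarith

end Mag
end
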